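/- arXiv:1906.11352 — 4 statements merged into one kernel-verified Lean document; each statement's English description precedes it below -/
import Mathlib

section
/- Let $n \ge 3$ and let $\rho : (a,b) \to (0,\infty)$ be twice differentiable. Define $m(s) = \tfrac{1}{2}\rho(s)^{n-2}(1-\rho'(s)^2)$ and $R(s) = (n-1)\rho(s)^{-2}[(n-2)(1-\rho'(s)^2) - 2\rho(s)\rho''(s)]$. If $\rho'(s) \ge 0$ and $R(s) \ge 0$ for all $s \in (a,b)$, then $m$ is monotone nondecreasing on $(a,b)$. -/
open Set Filter

/-- Monotonicity of the generalized Hawking mass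
`m(s) = ½ ρ(s)^(n-2) (1 - ρ'(s)²)` when the area radius is nondecreasing
(`ρ' ≥ 0`) and the scalar curvature
`R(s) = (n-1) ρ(s)⁻² [(n-2)(1-ρ'(s)²) - 2 ρ(s) ρ''(s)]` is nonnegative on `(a,b)`. -/
theorem hawking_mass_monotone
    (n : ℕ) (hn : 3 ≤ n) (a b : ℝ) (ρ : ℝ → ℝ)
    (hρpos : ∀ s ∈ Ioo a b, 0 < ρ s)
    (hρdiff : ∀ s ∈ Ioo a b, DifferentiableAt ℝ ρ s)
    (hρdiff2 : ∀ s ∈ Ioo a b, DifferentiableAt ℝ (deriv ρ) s)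
    (hρ' : ∀ s ∈ Ioo a b, 0 ≤ deriv ρ s)
    (hR : ∀ s ∈ Ioo a b,
      0 ≤ ((n:ℝ) - 1) / (ρ s)^2
            * (((n:ℝ) - 2) * (1 - (deriv ρ s)^2) - 2 * ρ s * deriv (deriv ρ) s)) :
    MonotoneOn (fun s => (1/2) * ρ s ^ (n-2) * (1 - (deriv ρ s)^2)) (Ioo a b) := by
  set f : ℝ → ℝ := fun s => (1/2) * ρ s ^ (n-2) * (1 - (deriv ρ s)^2) with hf
  -- derivative of f at points of the interval
  have key : ∀ s ∈ Ioo a b, HasDerivAt f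
      ((1/2) * ((((n-2 : ℕ) : ℝ) * ρ s ^ (n-2-1) * deriv ρ s) * (1 - (deriv ρ s)^2)
        + ρ s ^ (n-2) * (-(2 * deriv ρ s ^ 1 * deriv (deriv ρ) s)))) s := by
    intro s hs
    have h1 : HasDerivAt ρ (deriv ρ s) s := (hρdiff s hs).hasDerivAt
    have h2 : HasDerivAt (deriv ρ) (deriv (deriv ρ) s) s := (hρdiff2 s hs).hasDerivAt
    have hp : HasDerivAt (fun t => ρ t ^ (n-2))
        (((n-2 : ℕ) : ℝ) * ρ s ^ (n-2-1) * deriv ρ s) s := h1.pow (n-2)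
    have hq : HasDerivAt (fun t => 1 - (deriv ρ t)^2)
        (-(2 * deriv ρ s ^ 1 * deriv (deriv ρ) s)) s := by
      simpa using (hasDerivAt_const s (1:ℝ)).fun_sub (h2.fun_pow 2)
    simpa [hf, mul_assoc] using (hp.mul hq).const_mul (1/2 : ℝ)
  apply monotoneOn_of_deriv_nonneg (convex_Ioo a b)
  · exact fun s hs => ((key s (by simpa using hs)).continuousAt).continuousWithinAt
  · intro s hs
    rw [interior_Ioo] at hs
    exact (key s hs).differentiableAt.differentiableWithinAt
  · intro s hs
    rw [interior_Ioo] at hs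
    rw [(key s hs).deriv]
    have hρp := hρpos s hs
    have hr := hρ' s hs
    have hB : 0 ≤ ((n:ℝ) - 2) * (1 - (deriv ρ s)^2) - 2 * ρ s * deriv (deriv ρ) s := by
      have hc : 0 < ((n:ℝ) - 1) / (ρ s)^2 := by
        apply div_pos
        · have : (3:ℝ) ≤ (n:ℝ) := by exact_mod_cast hn
          linarith
        · positivity
      exact nonneg_of_mul_nonneg_right (hR s hs) hc
    have hpow : ρ s ^ (n-2) = ρ s ^ (n-3) * ρ s := by
      rw [← pow_succ]; congr 1; omega
    have hcast : ((n-2 : ℕ) : ℝ) = (n:ℝ) - 2 := by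
      have : (2:ℕ) ≤ n := by omega
      push_cast [Nat.cast_sub this]; ring
    have hidx : n - 2 - 1 = n - 3 := by omega
    rw [hpow, hcast, hidx]
    have hfac : (1/2) * ((((n:ℝ) - 2) * ρ s ^ (n-3) * deriv ρ s) * (1 - (deriv ρ s)^2)
        + (ρ s ^ (n-3) * ρ s) * (-(2 * deriv ρ s ^ 1 * deriv (deriv ρ) s)))
        = (1/2) * (ρ s ^ (n-3) * deriv ρ s)
          * (((n:ℝ) - 2) * (1 - (deriv ρ s)^2) - 2 * ρ s * deriv (deriv ρ) s) := by
      ring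
    rw [hfac]
    have h1 : 0 ≤ ρ s ^ (n-3) * deriv ρ s := mul_nonneg (pow_nonneg hρp.le _) hr
    positivity
end

section
/- Let $n \ge 3$ and let $\rho : [0,\infty) \to (0,\infty)$ be twice continuously differentiable with $\rho'(0) = 0$ (so that the inner boundary sphere is an apparent horizon/minimal surface). Define $m(s) = \tfrac{1}{2}\rho(s)^{n-2}(1-\rho'(s)^2)$ and $R(s) = (n-1)\rho(s)^{-2}[(n-2)(1-\rho'(s)^2) - 2\rho(s)\rho''(s)]$. Assume $\rho'(s) \ge 0$ and $R(s) \ge 0$ for all $s \ge 0$, and that $m(s)$ converges to a limit $m_\infty$ as $s \to \infty$. Then $m_\infty \ge \tfrac{1}{2}\rho(0)^{n-2} = \tfrac{1}{2}\left(\mathcal{A}_0/\omega_{n-1}\right)^{\frac{n-2}{n-1}}$, where $\mathcal{A}_0 = \omega_{n-1}\rho(0)^{n-1}$ is the area of the horizon and $\omega_{n-1}$ is the volume of the unit sphere $S^{n-1}$. -/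
open Set Filter

/-- One-dimensional Penrose inequality in spherical symmetry: if the inner boundary
is a horizon (`ρ'(0) = 0`), the area radius is nondecreasing, the scalar curvature
is nonnegative, and the Hawking mass converges to `mInf` at infinity, then
`mInf ≥ ½ ρ(0)^(n-2)`, which equals `½ (A₀/ω)^((n-2)/(n-1))` where
`A₀ = ω ρ(0)^(n-1)` is the horizon area and `ω` is the volume of the unit sphere. -/
theorem penrose_inequality_1d
    (n : ℕ) (hn : 3 ≤ n) (ω : ℝ) (hω : 0 < ω) (ρ ρ' ρ'' : ℝ → ℝ)
    (hρpos : ∀ s, 0 ≤ s → 0 < ρ s)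
    (hd1 : ∀ s, 0 ≤ s → HasDerivAt ρ (ρ' s) s)
    (hd2 : ∀ s, 0 ≤ s → HasDerivAt ρ' (ρ'' s) s)
    (hcont : ContinuousOn ρ'' (Ici 0))
    (hhorizon : ρ' 0 = 0)
    (hρ'nonneg : ∀ s, 0 ≤ s → 0 ≤ ρ' s)
    (hR : ∀ s, 0 ≤ s →
      0 ≤ ((n:ℝ) - 1) / (ρ s)^2
            * (((n:ℝ) - 2) * (1 - (ρ' s)^2) - 2 * ρ s * ρ'' s))
    (mInf : ℝ)
    (hlim : Tendsto (fun s => (1/2) * ρ s ^ (n-2) * (1 - (ρ' s)^2)) atTop (nhds mInf)) :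
    (1/2) * ρ 0 ^ (n-2) ≤ mInf ∧
    (1/2) * ρ 0 ^ (n-2)
      = (1/2) * ((ω * ρ 0 ^ (n-1)) / ω) ^ (((n:ℝ) - 2) / ((n:ℝ) - 1)) := by
  have hn2 : (2 : ℕ) ≤ n := by omega
  have hncast : ((n - 2 : ℕ) : ℝ) = (n : ℝ) - 2 := by
    push_cast [Nat.cast_sub hn2]; ring
  set m : ℝ → ℝ := fun s => (1/2) * ρ s ^ (n-2) * (1 - (ρ' s)^2) with hm
  set m' : ℝ → ℝ := fun s =>
    (1/2) * (((n-2:ℕ):ℝ) * ρ s ^ (n - 2 - 1) * ρ' s * (1 - (ρ' s)^2)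
      + ρ s ^ (n-2) * (0 - 2 * ρ' s ^ 1 * ρ'' s)) with hm'
  have hderiv : ∀ s, 0 ≤ s → HasDerivAt m (m' s) s := by
    intro s hs
    have h1 : HasDerivAt (fun t => ρ t ^ (n-2))
        (((n-2:ℕ):ℝ) * ρ s ^ (n - 2 - 1) * ρ' s) s := (hd1 s hs).pow (n-2)
    have h2 : HasDerivAt (fun t => 1 - (ρ' t)^2)
        (0 - 2 * ρ' s ^ 1 * ρ'' s) s := by
      exact ((hasDerivAt_const s (1:ℝ)).sub ((hd2 s hs).pow 2)).congr_deriv (by norm_num)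
    have h3 := ((h1.mul h2).const_mul (1/2 : ℝ))
    have heq : (fun y => (1/2 : ℝ) * (ρ y ^ (n-2) * (1 - (ρ' y)^2))) = m := by
      funext y; simp only [hm]; ring
    change HasDerivAt (fun y => (1/2 : ℝ) * (ρ y ^ (n-2) * (1 - (ρ' y)^2))) _ s at h3
    rw [heq] at h3
    exact h3
  have hderivnonneg : ∀ s, 0 ≤ s → 0 ≤ m' s := by
    intro s hs
    have hB : 0 ≤ ((n:ℝ) - 2) * (1 - (ρ' s)^2) - 2 * ρ s * ρ'' s := by
      have hc : 0 < ((n:ℝ) - 1) / (ρ s)^2 := by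
        apply div_pos
        · have : (3:ℝ) ≤ (n:ℝ) := by exact_mod_cast hn
          linarith
        · exact pow_pos (hρpos s hs) 2
      exact nonneg_of_mul_nonneg_right (hR s hs) hc
    have hpow : 0 ≤ ρ s ^ (n - 2 - 1) := (pow_pos (hρpos s hs) _).le
    have hpow2 : ρ s ^ (n - 2) = ρ s ^ (n - 2 - 1) * ρ s := by
      rw [← pow_succ]
      congr 1
      omega
    have key : m' s = (1/2) * ρ s ^ (n - 2 - 1) * ρ' s
        * (((n:ℝ) - 2) * (1 - (ρ' s)^2) - 2 * ρ s * ρ'' s) := by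
      simp only [hm', hpow2, hncast]
      ring
    rw [key]
    have := hρ'nonneg s hs
    positivity
  -- m is monotone on Ici 0
  have hmono : MonotoneOn m (Ici 0) := by
    apply monotoneOn_of_deriv_nonneg (convex_Ici 0)
    · intro s hs
      exact (hderiv s hs).continuousAt.continuousWithinAt
    · intro s hs
      rw [interior_Ici] at hs
      exact (hderiv s hs.le).differentiableAt.differentiableWithinAt
    · intro s hs
      rw [interior_Ici] at hs
      rw [(hderiv s hs.le).deriv]
      exact hderivnonneg s hs.le
  have hm0 : m 0 = (1/2) * ρ 0 ^ (n-2) := by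
    simp [hm, hhorizon]
  constructor
  · rw [← hm0]
    refine ge_of_tendsto hlim ?_
    filter_upwards [eventually_ge_atTop (0:ℝ)] with s hs
    exact hmono (self_mem_Ici) hs hs
  · have hρ0 : 0 < ρ 0 := hρpos 0 le_rfl
    have h1 : (ω * ρ 0 ^ (n-1)) / ω = ρ 0 ^ (n-1) := by
      field_simp
    rw [h1]
    have hn1cast : ((n - 1 : ℕ) : ℝ) = (n : ℝ) - 1 := by
      push_cast [Nat.cast_sub (by omega : 1 ≤ n)]; ring
    have : (ρ 0 ^ (n-1) : ℝ) ^ (((n:ℝ) - 2) / ((n:ℝ) - 1))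
        = ρ 0 ^ (n-2) := by
      rw [← Real.rpow_natCast (ρ 0) (n-1), ← Real.rpow_mul hρ0.le, hn1cast]
      have hne : (n:ℝ) - 1 ≠ 0 := by
        have : (3:ℝ) ≤ (n:ℝ) := by exact_mod_cast hn
        linarith
      rw [mul_div_cancel₀ _ hne, ← hncast, Real.rpow_natCast]
    rw [this]
end

section
/- Let $n \ge 3$, $s_0 > 0$, and constants $c_1, c_2, C > 0$. Let $r : [s_0,\infty) \to (0,\infty)$ be continuously differentiable with $c_1 s \le r(s) \le c_2 s$ for all $s \ge s_0$, and let $k_t : [s_0,\infty) \to \mathbb{R}$ be continuously differentiable and satisfy the linear ODE $k_t'(s) + \frac{2(n-1)\,r'(s)}{r(s)}\,k_t(s) = \mathcal{K}(s)$ where $|\mathcal{K}(s)| \le C s^{-n-1}$ for all $s \ge s_0$. Then there exists a constant $C' > 0$ (depending on $n, s_0, c_1, c_2, C$ and $|k_t(s_0)|$) such that $|k_t(s)| \le C' s^{-n}$ for all $s \ge s_0$. -/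
open Set Filter

/-- Decay estimate for the tangential second fundamental form: if `k_t` satisfies
the linear ODE `k_t' + 2(n-1) r'/r · k_t = 𝒦` with `|𝒦(s)| ≤ C s^{-n-1}` and
`c₁ s ≤ r(s) ≤ c₂ s`, then `|k_t(s)| ≤ C' s^{-n}` for some constant `C'`. -/
theorem kt_decay
    (n : ℕ) (hn : 3 ≤ n) (s₀ c₁ c₂ C : ℝ)
    (hs₀ : 0 < s₀) (hc₁ : 0 < c₁) (hc₂ : 0 < c₂) (hC : 0 < C)
    (r r' kt kt' : ℝ → ℝ)
    (hrpos : ∀ s, s₀ ≤ s → 0 < r s)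
    (hrbound : ∀ s, s₀ ≤ s → c₁ * s ≤ r s ∧ r s ≤ c₂ * s)
    (hrd : ∀ s, s₀ ≤ s → HasDerivAt r (r' s) s)
    (hr'cont : ContinuousOn r' (Ici s₀))
    (hktd : ∀ s, s₀ ≤ s → HasDerivAt kt (kt' s) s)
    (hkt'cont : ContinuousOn kt' (Ici s₀))
    (hK : ∀ s, s₀ ≤ s →
      |kt' s + 2 * ((n:ℝ) - 1) * r' s / r s * kt s| ≤ C / s ^ (n+1)) :
    ∃ C' > 0, ∀ s, s₀ ≤ s → |kt s| ≤ C' / s ^ n := by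
  have h1n : 1 ≤ n := by omega
  set m : ℕ := 2 * (n - 1) with hm
  have hmc : (m : ℝ) = 2 * ((n : ℝ) - 1) := by
    rw [hm, Nat.cast_mul, Nat.cast_sub h1n]; norm_num
  have hn2 : (0 : ℝ) < (n : ℝ) - 2 := by
    have : (3 : ℝ) ≤ (n : ℝ) := by exact_mod_cast hn
    linarith
  set F : ℝ → ℝ := fun s => r s ^ m * kt s with hF
  set F' : ℝ → ℝ := fun s => (m : ℝ) * r s ^ (m - 1) * r' s * kt s + r s ^ m * kt' s with hF'
  have hFd : ∀ s, s₀ ≤ s → HasDerivAt F (F' s) s := by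
    intro s hs
    exact (((hrd s hs).pow m).mul (hktd s hs))
  -- continuity of F'
  have hcontr : ContinuousOn r (Ici s₀) := fun s hs => (hrd s hs).continuousAt.continuousWithinAt
  have hcontkt : ContinuousOn kt (Ici s₀) := fun s hs => (hktd s hs).continuousAt.continuousWithinAt
  have hF'cont : ContinuousOn F' (Ici s₀) := by
    apply ContinuousOn.add
    · exact ((continuousOn_const.mul (hcontr.pow _)).mul hr'cont).mul hcontkt
    · exact (hcontr.pow _).mul hkt'cont
  -- pointwise bound on F'
  have hF'bound : ∀ t, s₀ ≤ t → |F' t| ≤ C * c₂ ^ m * t ^ (n - 3) := by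
    intro t ht
    have ht0 : 0 < t := hs₀.trans_le ht
    have hrt : 0 < r t := hrpos t ht
    have hpow : r t ^ m = r t ^ (m - 1) * r t := by
      rw [← pow_succ]; congr 1; omega
    have key : F' t = r t ^ m * (kt' t + (m : ℝ) * r' t / r t * kt t) := by
      rw [hF']
      field_simp
      rw [hpow]; ring
    have hKb := hK t ht
    rw [key, abs_mul, ← hmc] at *
    have h1 : |r t ^ m| = r t ^ m := abs_of_pos (pow_pos hrt m)
    rw [h1]
    have h2 : r t ^ m ≤ (c₂ * t) ^ m :=
      pow_le_pow_left₀ hrt.le (hrbound t ht).2 m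
    calc r t ^ m * |kt' t + (m : ℝ) * r' t / r t * kt t|
        ≤ (c₂ * t) ^ m * (C / t ^ (n + 1)) := by
          apply mul_le_mul h2 hKb (abs_nonneg _) (by positivity)
      _ = C * c₂ ^ m * t ^ (n - 3) := by
          have htm : t ^ m = t ^ (n - 3) * t ^ (n + 1) := by
            rw [← pow_add]; congr 1; omega
          rw [mul_pow, htm]
          field_simp
  -- main FTC estimate
  set D : ℝ := |F s₀| / s₀ ^ (n - 2) + C * c₂ ^ m / ((n : ℝ) - 2) with hD
  have hDpos : 0 < D := by positivity
  refine ⟨D / c₁ ^ m, by positivity, ?_⟩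
  intro s hs
  have hs0 : 0 < s := hs₀.trans_le hs
  -- FTC
  have hsub : uIcc s₀ s ⊆ Ici s₀ := by
    rw [uIcc_of_le hs]; exact Icc_subset_Ici_self
  have hint : IntervalIntegrable F' MeasureTheory.volume s₀ s :=
    (hF'cont.mono hsub).intervalIntegrable
  have heq : ∫ t in s₀..s, F' t = F s - F s₀ :=
    intervalIntegral.integral_eq_sub_of_hasDerivAt (fun t ht => hFd t (hsub ht).out) hint
  have hbnd : |∫ t in s₀..s, F' t| ≤ ∫ t in s₀..s, C * c₂ ^ m * t ^ (n - 3) := by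
    refine (intervalIntegral.abs_integral_le_integral_abs hs).trans ?_
    apply intervalIntegral.integral_mono_on hs hint.abs
    · exact (Continuous.intervalIntegrable (by continuity) _ _)
    · intro t ht
      exact hF'bound t ht.1
  have hval : ∫ t in s₀..s, C * c₂ ^ m * t ^ (n - 3)
      = C * c₂ ^ m * ((s ^ (n - 2) - s₀ ^ (n - 2)) / ((n : ℝ) - 2)) := by
    rw [intervalIntegral.integral_const_mul, integral_pow]
    congr 2
    · congr 1 <;> · congr 1; omega
    · have : ((n : ℝ) - 3) + 1 = (n : ℝ) - 2 := by ring
      rw [show ((n - 3 : ℕ) : ℝ) = (n : ℝ) - 3 by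
        rw [Nat.cast_sub (by omega)]; norm_num]
      linarith
  have hFs : |F s| ≤ D * s ^ (n - 2) := by
    have hmono : s₀ ^ (n - 2) ≤ s ^ (n - 2) := pow_le_pow_left₀ hs₀.le hs _
    have h1 : |F s| ≤ |F s₀| + |∫ t in s₀..s, F' t| := by
      have := abs_sub_abs_le_abs_sub (F s) (F s₀)
      rw [← heq] at this
      linarith [abs_sub_comm (F s) (F s₀)]
    have h2 : |∫ t in s₀..s, F' t| ≤ C * c₂ ^ m * (s ^ (n - 2) / ((n : ℝ) - 2)) := by
      refine hbnd.trans ?_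
      rw [hval]
      have hs₀p : 0 ≤ s₀ ^ (n - 2) := by positivity
      gcongr
      linarith
    have h3 : |F s₀| ≤ |F s₀| / s₀ ^ (n - 2) * s ^ (n - 2) := by
      rw [div_mul_eq_mul_div, le_div_iff₀ (by positivity)]
      exact mul_le_mul_of_nonneg_left hmono (abs_nonneg _)
    have h4 : D * s ^ (n - 2)
        = |F s₀| / s₀ ^ (n - 2) * s ^ (n - 2) + C * c₂ ^ m * (s ^ (n - 2) / ((n : ℝ) - 2)) := by
      rw [hD]; ring
    calc |F s| ≤ |F s₀| + |∫ t in s₀..s, F' t| := h1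
      _ ≤ |F s₀| / s₀ ^ (n - 2) * s ^ (n - 2)
            + C * c₂ ^ m * (s ^ (n - 2) / ((n : ℝ) - 2)) := add_le_add h3 h2
      _ = D * s ^ (n - 2) := h4.symm
  -- conclude
  have hrm : (c₁ * s) ^ m ≤ r s ^ m :=
    pow_le_pow_left₀ (by positivity) (hrbound s hs).1 m
  have hrsm : 0 < r s ^ m := pow_pos (hrpos s hs) m
  have hkts : |kt s| = |F s| / r s ^ m := by
    rw [hF]
    rw [abs_mul, abs_of_pos hrsm]
    field_simp
  rw [hkts]
  have step : |F s| / r s ^ m ≤ D * s ^ (n - 2) / (c₁ * s) ^ m :=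
    div_le_div₀ (by positivity) hFs (by positivity) hrm
  refine step.trans (le_of_eq ?_)
  have hcs : (c₁ * s) ^ m = c₁ ^ m * (s ^ (n - 2) * s ^ n) := by
    rw [mul_pow, ← pow_add, show n - 2 + n = m from by omega]
  rw [hcs]
  field_simp
end

section
/- Let $n \ge 3$ and constants $\tilde c, c_5 > 0$, $\bar r \ge \tilde r_0 > 0$, $0 < m \le \min\{\bar r^{-2}, 1\}$. Let $u : [\tilde r_0, \infty) \to (0,\infty)$ be differentiable with (i) $\int_{\tilde r_0}^{\infty} r^{n-1}\left(\frac{d}{dr}\log u(r)\right)^2 dr \le \tilde c\, m$, and (ii) $|\log u(r)| \le c_5\, r^{-2(n-2)}$ for all $r \ge \bar r$. Then for every $r_1$ with $\tilde r_0 \le r_1 \le m^{-1/2}$ one has $|\log u(r_1)| \le c_5\, m^{\,n-2} + \sqrt{\tilde c\, m^{1/2}\, \tilde r_0^{\,1-n}}$; in particular there is a constant $C = C(n, \tilde c, c_5)$ with $|\log u(r_1)| \le C\, m^{1/4}\big(1 + \tilde r_0^{(1-n)/2}\big)$. -/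
open Set Filter MeasureTheory

set_option maxHeartbeats 1000000

/-- Elementary AM–GM inequality for square roots. -/
lemma sqrt_amgm (a b : ℝ) (ha : 0 ≤ a) (hb : 0 ≤ b) :
    Real.sqrt (a * b) ≤ (1/2) * (a + b) := by
  rw [Real.sqrt_mul ha]
  nlinarith [sq_nonneg (Real.sqrt a - Real.sqrt b), Real.sq_sqrt ha, Real.sq_sqrt hb,
    Real.sqrt_nonneg a, Real.sqrt_nonneg b]

/-- Main estimate (first half of the theorem), factored out. -/
lemma c0_key (n : ℕ) (hn : 3 ≤ n) (ct c₅ : ℝ) (hct : 0 < ct) (hc₅ : 0 < c₅)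
    (r₀ rb m : ℝ) (u v : ℝ → ℝ)
    (hr₀ : 0 < r₀) (hrb : r₀ ≤ rb) (hm : 0 < m) (hm1 : m ≤ min (rb ^ (-2 : ℝ)) 1)
    (hu : ∀ r, r₀ ≤ r → 0 < u r)
    (hderiv : ∀ r, r₀ ≤ r → HasDerivAt (fun x => Real.log (u x)) (v r) r)
    (hInt : IntegrableOn (fun r => r ^ (n-1) * (v r)^2) (Set.Ici r₀))
    (hIntB : (∫ r in Set.Ici r₀, r ^ (n-1) * (v r)^2) ≤ ct * m)
    (hasym : ∀ r, rb ≤ r → |Real.log (u r)| ≤ c₅ * r ^ (-(2 * ((n:ℝ) - 2))))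
    (r₁ : ℝ) (hr₁ : r₀ ≤ r₁) (hr₁m : r₁ ≤ m ^ (-(1:ℝ)/2)) :
    |Real.log (u r₁)|
      ≤ c₅ * m ^ ((n:ℝ) - 2) + Real.sqrt (ct * m ^ ((1:ℝ)/2) * r₀ ^ ((1:ℝ) - n)) := by
  set f := fun x => Real.log (u x) with hfdef
  have hn3 : (3:ℝ) ≤ (n:ℝ) := by exact_mod_cast hn
  have hmrb : m ≤ rb ^ (-2:ℝ) := le_trans hm1 (min_le_left _ _)
  have hrb0 : 0 < rb := lt_of_lt_of_le hr₀ hrb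
  set r₂ : ℝ := m ^ (-(1:ℝ)/2) with hr₂def
  have hr₂pos : 0 < r₂ := Real.rpow_pos_of_pos hm _
  have hrbr₂ : rb ≤ r₂ := by
    have h1 : (rb ^ (-2:ℝ)) ^ (-(1:ℝ)/2) ≤ m ^ (-(1:ℝ)/2) :=
      Real.rpow_le_rpow_of_nonpos hm hmrb (by norm_num)
    calc rb = (rb ^ (-2:ℝ)) ^ (-(1:ℝ)/2) := by
            rw [← Real.rpow_mul hrb0.le]; norm_num
      _ ≤ r₂ := h1
  have hr₁r₂ : r₁ ≤ r₂ := hr₁m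
  have hr₁0 : 0 < r₁ := lt_of_lt_of_le hr₀ hr₁
  -- bound at r₂
  have hfr₂ : |f r₂| ≤ c₅ * m ^ ((n:ℝ) - 2) := by
    have h := hasym r₂ hrbr₂
    have heq : r₂ ^ (-(2 * ((n:ℝ) - 2))) = m ^ ((n:ℝ) - 2) := by
      rw [hr₂def, ← Real.rpow_mul hm.le]
      congr 1; ring
    rwa [heq] at h
  -- the derivative hypothesis on the interval
  have hderiv' : ∀ x ∈ Set.uIcc r₁ r₂, HasDerivAt f (v x) x := by
    intro x hx
    rw [Set.uIcc_of_le hr₁r₂] at hx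
    exact hderiv x (le_trans hr₁ hx.1)
  -- integrability of the weighted square on Ioc r₁ r₂
  have hgInt : IntegrableOn (fun r => r ^ (n-1) * (v r)^2) (Ioc r₁ r₂) :=
    hInt.mono_set (fun x hx => le_trans hr₁ hx.1.le)
  -- measurability of v on Ioc r₁ r₂
  have hmeasv : AEStronglyMeasurable v (volume.restrict (Ioc r₁ r₂)) := by
    have hd : ∀ x ∈ Ioc r₁ r₂, deriv f x = v x := fun x hx =>
      (hderiv x (le_trans hr₁ hx.1.le)).deriv
    exact (measurable_deriv f).aestronglyMeasurable.congr
      ((ae_restrict_iff' measurableSet_Ioc).2 (ae_of_all _ hd))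
  have hr₀pow : (0:ℝ) < r₀ ^ (n-1) := pow_pos hr₀ _
  -- integrability of v on Ioc r₁ r₂
  have hconst : IntegrableOn (fun _ => (1:ℝ)) (Ioc r₁ r₂) :=
    integrableOn_const measure_Ioc_lt_top.ne
  have hvInt : IntegrableOn v (Ioc r₁ r₂) := by
    refine Integrable.mono'
      (hconst.add (hgInt.const_mul ((r₀ ^ (n-1))⁻¹))) hmeasv ?_
    refine (ae_restrict_iff' measurableSet_Ioc).2 (ae_of_all _ fun r hr => ?_)
    have hr₀r : r₀ ≤ r := le_trans hr₁ hr.1.le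
    have hA : r₀ ^ (n-1) ≤ r ^ (n-1) := pow_le_pow_left₀ hr₀.le hr₀r _
    have h2 : (v r) ^ 2 ≤ (r₀ ^ (n-1))⁻¹ * (r ^ (n-1) * (v r)^2) := by
      calc (v r)^2 = (r₀ ^ (n-1))⁻¹ * (r₀ ^ (n-1) * (v r)^2) := by
            field_simp
        _ ≤ (r₀ ^ (n-1))⁻¹ * (r ^ (n-1) * (v r)^2) := by
            apply mul_le_mul_of_nonneg_left _ (by positivity)
            exact mul_le_mul_of_nonneg_right hA (sq_nonneg _)
    have h3 : |v r| ≤ 1 + (v r)^2 := by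
      nlinarith [sq_nonneg (|v r| - 1), sq_abs (v r), abs_nonneg (v r)]
    simp only [Real.norm_eq_abs, Pi.add_apply]
    linarith
  have hIvInt : IntervalIntegrable v volume r₁ r₂ := by
    rw [intervalIntegrable_iff, Set.uIoc_of_le hr₁r₂]; exact hvInt
  have hFTC : ∫ x in r₁..r₂, v x = f r₂ - f r₁ :=
    intervalIntegral.integral_eq_sub_of_hasDerivAt hderiv' hIvInt
  -- the constants for AM-GM
  set A : ℝ := ct * m with hAdef
  set B : ℝ := r₀ ^ ((1:ℝ) - n) * r₂ with hBdef
  have hApos : 0 < A := mul_pos hct hm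
  have hr₀rpow : (0:ℝ) < r₀ ^ ((1:ℝ) - n) := Real.rpow_pos_of_pos hr₀ _
  have hBpos : 0 < B := mul_pos hr₀rpow hr₂pos
  set sA := Real.sqrt A with hsAdef
  set sB := Real.sqrt B with hsBdef
  have hsA : 0 < sA := Real.sqrt_pos.2 hApos
  have hsB : 0 < sB := Real.sqrt_pos.2 hBpos
  set t : ℝ := sB / sA with htdef
  have ht : 0 < t := div_pos hsB hsA
  -- pointwise AM-GM bound on Icc r₁ r₂
  have hpt : ∀ r ∈ Icc r₁ r₂,
      |v r| ≤ (1/2) * (t * (r ^ (n-1) * (v r)^2) + t⁻¹ * r₀ ^ ((1:ℝ) - n)) := by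
    intro r hr
    have hr₀r : r₀ ≤ r := le_trans hr₁ hr.1
    have hrpos : 0 < r := lt_of_lt_of_le hr₀ hr₀r
    have hb : r ^ ((1:ℝ) - n) ≤ r₀ ^ ((1:ℝ) - n) :=
      Real.rpow_le_rpow_of_nonpos hr₀ hr₀r (by linarith)
    have hbpos : 0 < r ^ ((1:ℝ) - n) := Real.rpow_pos_of_pos hrpos _
    have hab : (r ^ (n-1) * (v r)^2) * (r ^ ((1:ℝ) - n)) = (v r)^2 := by
      have h1 : (r : ℝ) ^ (n-1) = r ^ (((n:ℝ) - 1)) := by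
        rw [← Real.rpow_natCast r (n-1)]
        congr 1
        have : (1:ℕ) ≤ n := by omega
        push_cast [Nat.cast_sub this]
        ring
      rw [h1, mul_right_comm, ← Real.rpow_add hrpos]
      norm_num
    have hsqrt : |v r| = Real.sqrt ((t * (r ^ (n-1) * (v r)^2)) * (t⁻¹ * r ^ ((1:ℝ) - n))) := by
      rw [show (t * (r ^ (n-1) * (v r)^2)) * (t⁻¹ * r ^ ((1:ℝ) - n))
            = (t * t⁻¹) * ((r ^ (n-1) * (v r)^2) * (r ^ ((1:ℝ) - n))) by ring,
        mul_inv_cancel₀ ht.ne', one_mul, hab, Real.sqrt_sq_eq_abs]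
    have hta : (0:ℝ) ≤ t * (r ^ (n-1) * (v r)^2) := by positivity
    have htb : (0:ℝ) ≤ t⁻¹ * r ^ ((1:ℝ) - n) := by positivity
    have hAMGM : Real.sqrt ((t * (r ^ (n-1) * (v r)^2)) * (t⁻¹ * r ^ ((1:ℝ) - n)))
        ≤ (1/2) * (t * (r ^ (n-1) * (v r)^2) + t⁻¹ * r ^ ((1:ℝ) - n)) :=
      sqrt_amgm _ _ hta htb
    rw [hsqrt]
    refine hAMGM.trans ?_
    have := mul_le_mul_of_nonneg_left hb (le_of_lt (inv_pos.2 ht))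
    linarith
  -- integrate the pointwise bound
  have hφInt : IntervalIntegrable
      (fun r => (1/2) * (t * (r ^ (n-1) * (v r)^2) + t⁻¹ * r₀ ^ ((1:ℝ) - n)))
      volume r₁ r₂ := by
    apply IntervalIntegrable.const_mul
    apply IntervalIntegrable.add
    · apply IntervalIntegrable.const_mul
      rw [intervalIntegrable_iff, Set.uIoc_of_le hr₁r₂]; exact hgInt
    · exact intervalIntegrable_const
  have habsInt : |∫ x in r₁..r₂, v x| ≤ ∫ x in r₁..r₂, |v x| :=
    intervalIntegral.abs_integral_le_integral_abs hr₁r₂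
  have hmono : (∫ x in r₁..r₂, |v x|)
      ≤ ∫ x in r₁..r₂, (1/2) * (t * (x ^ (n-1) * (v x)^2) + t⁻¹ * r₀ ^ ((1:ℝ) - n)) := by
    apply intervalIntegral.integral_mono_on hr₁r₂ hIvInt.abs hφInt
    intro x hx; exact hpt x hx
  -- compute the right-hand side integral
  have hgnn : 0 ≤ᵐ[volume.restrict (Set.Ici r₀)] fun r => r ^ (n-1) * (v r)^2 := by
    refine (ae_restrict_iff' measurableSet_Ici).2 (ae_of_all _ fun r hr => ?_)
    have : (0:ℝ) < r := lt_of_lt_of_le hr₀ hr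
    positivity
  have hIocIci : (∫ x in Ioc r₁ r₂, x ^ (n-1) * (v x)^2) ≤ ct * m := by
    refine le_trans (setIntegral_mono_set hInt hgnn ?_) hIntB
    exact HasSubset.Subset.eventuallyLE (fun x hx => le_trans hr₁ hx.1.le)
  have hIval : (∫ x in r₁..r₂, x ^ (n-1) * (v x)^2) ≤ ct * m := by
    rw [intervalIntegral.integral_of_le hr₁r₂]; exact hIocIci
  have hRHS : (∫ x in r₁..r₂, (1/2) * (t * (x ^ (n-1) * (v x)^2) + t⁻¹ * r₀ ^ ((1:ℝ) - n)))
      ≤ (1/2) * (t * A + t⁻¹ * B) := by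
    rw [intervalIntegral.integral_const_mul]
    have hadd : (∫ x in r₁..r₂, (t * (x ^ (n-1) * (v x)^2) + t⁻¹ * r₀ ^ ((1:ℝ) - n)))
        = (∫ x in r₁..r₂, t * (x ^ (n-1) * (v x)^2)) + (t⁻¹ * r₀ ^ ((1:ℝ) - n)) * (r₂ - r₁) := by
      rw [intervalIntegral.integral_add
          (by apply IntervalIntegrable.const_mul
              rw [intervalIntegrable_iff, Set.uIoc_of_le hr₁r₂]; exact hgInt)
          intervalIntegrable_const,
        intervalIntegral.integral_const]
      ring_nf
    rw [hadd, intervalIntegral.integral_const_mul]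
    have h1 : t * (∫ x in r₁..r₂, x ^ (n-1) * (v x)^2) ≤ t * A :=
      mul_le_mul_of_nonneg_left hIval ht.le
    have h2 : (t⁻¹ * r₀ ^ ((1:ℝ) - n)) * (r₂ - r₁) ≤ t⁻¹ * B := by
      rw [hBdef, mul_assoc, ← mul_assoc]
      have : r₂ - r₁ ≤ r₂ := by linarith
      calc (t⁻¹ * r₀ ^ ((1:ℝ) - n)) * (r₂ - r₁) ≤ (t⁻¹ * r₀ ^ ((1:ℝ) - n)) * r₂ :=
            mul_le_mul_of_nonneg_left this (by positivity)
        _ = t⁻¹ * (r₀ ^ ((1:ℝ) - n) * r₂) := by ring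
    linarith
  -- the AM-GM constant identity
  have hAB : (1/2) * (t * A + t⁻¹ * B) = Real.sqrt (A * B) := by
    have hA' : A = sA * sA := (Real.mul_self_sqrt hApos.le).symm
    have hB' : B = sB * sB := (Real.mul_self_sqrt hBpos.le).symm
    rw [Real.sqrt_mul hApos.le, htdef]
    rw [hA', hB', Real.sqrt_mul_self hsA.le, Real.sqrt_mul_self hsB.le]
    field_simp
    ring
  -- identify A*B with the target
  have hABval : A * B = ct * m ^ ((1:ℝ)/2) * r₀ ^ ((1:ℝ) - n) := by
    have hmm : m * m ^ (-(1:ℝ)/2) = m ^ ((1:ℝ)/2) := by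
      nth_rewrite 1 [← Real.rpow_one m]
      rw [← Real.rpow_add hm]
      norm_num
    rw [hAdef, hBdef, hr₂def]
    calc ct * m * (r₀ ^ ((1:ℝ) - n) * m ^ (-(1:ℝ)/2))
        = ct * (m * m ^ (-(1:ℝ)/2)) * r₀ ^ ((1:ℝ) - n) := by ring
      _ = ct * m ^ ((1:ℝ)/2) * r₀ ^ ((1:ℝ) - n) := by rw [hmm]
  -- put everything together
  have hdiff : |f r₂ - f r₁| ≤ Real.sqrt (ct * m ^ ((1:ℝ)/2) * r₀ ^ ((1:ℝ) - n)) := by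
    rw [← hFTC, ← hABval, ← hAB]
    exact le_trans habsInt (le_trans hmono hRHS)
  calc |f r₁| = |f r₂ - (f r₂ - f r₁)| := by congr 1; ring
    _ ≤ |f r₂| + |f r₂ - f r₁| := abs_sub _ _
    _ ≤ c₅ * m ^ ((n:ℝ) - 2) + Real.sqrt (ct * m ^ ((1:ℝ)/2) * r₀ ^ ((1:ℝ) - n)) :=
        add_le_add hfr₂ hdiff

/-- Uniform `C⁰` smallness of the log of the conformal factor away from the center:
combining (i) the weighted radial `L²` gradient bound `∫ r^{n-1}((log u)')² ≤ c̃ m`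
with (ii) the asymptotic bound `|log u(r)| ≤ c₅ r^{-2(n-2)}` for `r ≥ r̄`, one gets
for `r₀ ≤ r₁ ≤ m^{-1/2}` that
`|log u(r₁)| ≤ c₅ m^{n-2} + √(c̃ m^{1/2} r₀^{1-n})`; in particular there is a
constant `C = C(n, c̃, c₅)` with `|log u(r₁)| ≤ C m^{1/4} (1 + r₀^{(1-n)/2})`. -/
theorem c0_control_log_conformal_factor
    (n : ℕ) (hn : 3 ≤ n) (ct c₅ : ℝ) (hct : 0 < ct) (hc₅ : 0 < c₅) :
    (∀ (r₀ rb m : ℝ) (u v : ℝ → ℝ),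
      0 < r₀ → r₀ ≤ rb → 0 < m → m ≤ min (rb ^ (-2 : ℝ)) 1 →
      (∀ r, r₀ ≤ r → 0 < u r) →
      (∀ r, r₀ ≤ r → HasDerivAt (fun x => Real.log (u x)) (v r) r) →
      IntegrableOn (fun r => r ^ (n-1) * (v r)^2) (Set.Ici r₀) →
      (∫ r in Set.Ici r₀, r ^ (n-1) * (v r)^2) ≤ ct * m →
      (∀ r, rb ≤ r → |Real.log (u r)| ≤ c₅ * r ^ (-(2 * ((n:ℝ) - 2)))) →
      ∀ r₁, r₀ ≤ r₁ → r₁ ≤ m ^ (-(1:ℝ)/2) →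
        |Real.log (u r₁)|
          ≤ c₅ * m ^ ((n:ℝ) - 2) + Real.sqrt (ct * m ^ ((1:ℝ)/2) * r₀ ^ ((1:ℝ) - n))) ∧
    (∃ C > 0, ∀ (r₀ rb m : ℝ) (u v : ℝ → ℝ),
      0 < r₀ → r₀ ≤ rb → 0 < m → m ≤ min (rb ^ (-2 : ℝ)) 1 →
      (∀ r, r₀ ≤ r → 0 < u r) →
      (∀ r, r₀ ≤ r → HasDerivAt (fun x => Real.log (u x)) (v r) r) →
      IntegrableOn (fun r => r ^ (n-1) * (v r)^2) (Set.Ici r₀) →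
      (∫ r in Set.Ici r₀, r ^ (n-1) * (v r)^2) ≤ ct * m →
      (∀ r, rb ≤ r → |Real.log (u r)| ≤ c₅ * r ^ (-(2 * ((n:ℝ) - 2)))) →
      ∀ r₁, r₀ ≤ r₁ → r₁ ≤ m ^ (-(1:ℝ)/2) →
        |Real.log (u r₁)| ≤ C * m ^ ((1:ℝ)/4) * (1 + r₀ ^ (((1:ℝ) - n)/2))) := by
  constructor
  · intro r₀ rb m u v h1 h2 h3 h4 h5 h6 h7 h8 h9 r₁ h10 h11
    exact c0_key n hn ct c₅ hct hc₅ r₀ rb m u v h1 h2 h3 h4 h5 h6 h7 h8 h9 r₁ h10 h11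
  · refine ⟨c₅ + Real.sqrt ct, by positivity, ?_⟩
    intro r₀ rb m u v h1 h2 h3 h4 h5 h6 h7 h8 h9 r₁ h10 h11
    have key := c0_key n hn ct c₅ hct hc₅ r₀ rb m u v h1 h2 h3 h4 h5 h6 h7 h8 h9 r₁ h10 h11
    have hn3 : (3:ℝ) ≤ (n:ℝ) := by exact_mod_cast hn
    have hm1 : m ≤ 1 := le_trans h4 (min_le_right _ _)
    -- first term
    have hb1 : m ^ ((n:ℝ) - 2) ≤ m ^ ((1:ℝ)/4) :=
      Real.rpow_le_rpow_of_exponent_ge h3 hm1 (by linarith)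
    -- second term
    have hb2 : Real.sqrt (ct * m ^ ((1:ℝ)/2) * r₀ ^ ((1:ℝ) - n))
        = Real.sqrt ct * m ^ ((1:ℝ)/4) * r₀ ^ (((1:ℝ) - n)/2) := by
      rw [Real.sqrt_mul (by positivity), Real.sqrt_mul hct.le]
      congr 1
      · congr 1
        rw [Real.sqrt_eq_rpow, ← Real.rpow_mul h3.le]
        norm_num
      · rw [Real.sqrt_eq_rpow, ← Real.rpow_mul h1.le]
        congr 1; ring
    have hmp : (0:ℝ) ≤ m ^ ((1:ℝ)/4) := (Real.rpow_pos_of_pos h3 _).le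
    have hrp : (0:ℝ) ≤ r₀ ^ (((1:ℝ) - n)/2) := (Real.rpow_pos_of_pos h1 _).le
    have hsct : (0:ℝ) ≤ Real.sqrt ct := Real.sqrt_nonneg _
    calc |Real.log (u r₁)|
        ≤ c₅ * m ^ ((n:ℝ) - 2) + Real.sqrt (ct * m ^ ((1:ℝ)/2) * r₀ ^ ((1:ℝ) - n)) := key
      _ = c₅ * m ^ ((n:ℝ) - 2) + Real.sqrt ct * m ^ ((1:ℝ)/4) * r₀ ^ (((1:ℝ) - n)/2) := by
          rw [hb2]
      _ ≤ c₅ * m ^ ((1:ℝ)/4) + Real.sqrt ct * m ^ ((1:ℝ)/4) * r₀ ^ (((1:ℝ) - n)/2) := by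
          have := mul_le_mul_of_nonneg_left hb1 hc₅.le
          linarith
      _ ≤ (c₅ + Real.sqrt ct) * m ^ ((1:ℝ)/4) * (1 + r₀ ^ (((1:ℝ) - n)/2)) := by
          nlinarith [mul_nonneg (mul_nonneg hc₅.le hmp) hrp,
            mul_nonneg hsct hmp, mul_nonneg (mul_nonneg hsct hmp) hrp]
end
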